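/- Let 0 ≤ k₁ < k₂ and a > 0 be real numbers, and let F be the set of Borel probability measures μ on [0,∞) satisfying ∫ max(0, x − k₂) dμ(x) = a. Then: (i) F is nonempty; (ii) inf { ∫ max(0, x − k₁) dμ(x) : μ ∈ F } = a; and (iii) every μ ∈ F satisfies ∫ max(0, x − k₁) dμ(x) > a. In particular, the infimum is not attained by any measure in F. -/

import Mathlib

open MeasureTheory

noncomputable def mixM (p t : ℝ) : Measure ℝ :=
  ENNReal.ofReal (1 - p) • Measure.dirac 0 + ENNReal.ofReal p • Measure.dirac t

lemma integrable_dirac'' (f : ℝ → ℝ) (a : ℝ) : Integrable f (Measure.dirac a) := by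
  have h : (fun _ : ℝ => f a) =ᵐ[Measure.dirac a] f := by
    rw [MeasureTheory.ae_dirac_eq]; exact Filter.eventually_pure.2 rfl
  exact (integrable_const (f a)).congr h

lemma mix_prob (p t : ℝ) (hp0 : 0 ≤ p) (hp1 : p ≤ 1) : IsProbabilityMeasure (mixM p t) := by
  constructor
  simp only [mixM, Measure.add_apply, Measure.smul_apply, smul_eq_mul,
    Measure.dirac_apply_of_mem (Set.mem_univ _), mul_one]
  rw [← ENNReal.ofReal_add (by linarith) hp0]
  norm_num

lemma mix_Iio (p t : ℝ) (ht : 0 ≤ t) : mixM p t (Set.Iio 0) = 0 := by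
  simp [mixM, Measure.dirac_apply' _ measurableSet_Iio, Set.indicator_apply, not_lt.mpr ht]

lemma mix_integrable (p t k : ℝ) : Integrable (fun x => max 0 (x - k)) (mixM p t) :=
  ((integrable_dirac'' _ _).smul_measure ENNReal.ofReal_ne_top).add_measure
    ((integrable_dirac'' _ _).smul_measure ENNReal.ofReal_ne_top)

lemma mix_integral (p t k : ℝ) (hp0 : 0 ≤ p) (hp1 : p ≤ 1) (hk : 0 ≤ k) (hkt : k ≤ t) :
    ∫ x, max 0 (x - k) ∂(mixM p t) = p * (t - k) := by
  rw [mixM, integral_add_measure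
      ((integrable_dirac'' _ _).smul_measure ENNReal.ofReal_ne_top)
      ((integrable_dirac'' _ _).smul_measure ENNReal.ofReal_ne_top),
    integral_smul_measure, integral_smul_measure, integral_dirac, integral_dirac]
  rw [ENNReal.toReal_ofReal (by linarith), ENNReal.toReal_ofReal hp0]
  rw [max_eq_left (by linarith), max_eq_right (by linarith)]
  simp only [smul_eq_mul]; ring

theorem gmp_infimum_not_attained
    (k₁ k₂ a : ℝ) (hk₁ : 0 ≤ k₁) (hk : k₁ < k₂) (ha : 0 < a)
    (F : Set (Measure ℝ))
    (hF : F = {μ | IsProbabilityMeasure μ ∧ μ (Set.Iio 0) = 0 ∧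
        Integrable (fun x => max 0 (x - k₂)) μ ∧ ∫ x, max 0 (x - k₂) ∂μ = a}) :
    F.Nonempty ∧
    sInf ((fun μ => ∫ x, max 0 (x - k₁) ∂μ) '' F) = a ∧
    ∀ μ ∈ F, a < ∫ x, max 0 (x - k₁) ∂μ := by
  have hk₂ : 0 ≤ k₂ := le_of_lt (lt_of_le_of_lt hk₁ hk)
  -- family of feasible measures
  have hfam : ∀ t : ℝ, k₂ + a ≤ t →
      mixM (a / (t - k₂)) t ∈ F ∧
      (∫ x, max 0 (x - k₁) ∂(mixM (a / (t - k₂)) t)) = a / (t - k₂) * (t - k₁) := by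
    intro t ht
    set p := a / (t - k₂) with hp
    have htk : (0:ℝ) < t - k₂ := by linarith
    have hp0 : 0 < p := div_pos ha htk
    have hp1 : p ≤ 1 := by
      rw [hp, div_le_one htk]; linarith
    have ht0 : (0:ℝ) ≤ t := by linarith
    constructor
    · rw [hF]
      refine ⟨mix_prob p t hp0.le hp1, mix_Iio p t ht0, mix_integrable p t k₂, ?_⟩
      rw [mix_integral p t k₂ hp0.le hp1 hk₂ (by linarith)]
      exact div_mul_cancel₀ a (ne_of_gt htk)
    · exact mix_integral p t k₁ hp0.le hp1 hk₁ (by linarith)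
  -- (iii)
  have hiii : ∀ μ ∈ F, a < ∫ x, max 0 (x - k₁) ∂μ := by
    intro μ hμ
    rw [hF] at hμ
    obtain ⟨hprob, h0, hint₂, heq₂⟩ := hμ
    set s : Set ℝ := {x | k₂ < x} with hs
    have hsm : MeasurableSet s := measurableSet_lt measurable_const measurable_id
    -- μ s ≠ 0
    have hμs : μ s ≠ 0 := by
      intro h
      have hzero : (fun x => max 0 (x - k₂)) =ᵐ[μ] 0 := by
        have : ∀ᵐ x ∂μ, x ∉ s := by
          rw [ae_iff]; simpa using h
        filter_upwards [this] with x hx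
        simp only [hs, Set.mem_setOf_eq, not_lt] at hx
        simp [max_eq_left (by linarith : x - k₂ ≤ 0)]
      have hz : (∫ x, max 0 (x - k₂) ∂μ) = 0 := by
        rw [integral_congr_ae hzero]; simp
      linarith [heq₂, hz]
    -- lower bound function
    have hintInd : Integrable (s.indicator fun _ => (k₂ - k₁)) μ :=
      (integrable_const (k₂ - k₁)).indicator hsm
    have hptw : ∀ x, (fun x => max 0 (x - k₂)) x + (s.indicator fun _ => (k₂ - k₁)) x
        ≤ max 0 (x - k₁) := by
      intro x
      by_cases hx : x ∈ s
      · simp only [Set.indicator_of_mem hx]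
        have hxk : k₂ < x := hx
        rw [max_eq_right (by linarith : (0:ℝ) ≤ x - k₂),
          max_eq_right (by linarith : (0:ℝ) ≤ x - k₁)]
        ring_nf; linarith
      · simp only [Set.indicator_of_notMem hx, add_zero]
        have hxk : x ≤ k₂ := not_lt.mp hx
        rw [max_eq_left (by linarith : x - k₂ ≤ 0)]
        exact le_max_left _ _
    -- f₁ integrable
    have hintf₁ : Integrable (fun x => max 0 (x - k₁)) μ := by
      refine (hint₂.add (integrable_const (k₂ - k₁))).mono'
        ((continuous_const.max (continuous_id.sub continuous_const)).aestronglyMeasurable) ?_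
      filter_upwards with x
      rw [Real.norm_eq_abs, abs_of_nonneg (le_max_left _ _)]
      simp only [Pi.add_apply]
      apply max_le
      · have := le_max_left (0:ℝ) (x - k₂); linarith
      · have := le_max_right (0:ℝ) (x - k₂); linarith
    have hmono : ∫ x, ((fun x => max 0 (x - k₂)) x + (s.indicator fun _ => (k₂ - k₁)) x) ∂μ
        ≤ ∫ x, max 0 (x - k₁) ∂μ :=
      integral_mono (hint₂.add hintInd) hintf₁ hptw
    rw [integral_add hint₂ hintInd, heq₂, integral_indicator_const _ hsm] at hmono
    have hμs' : 0 < (μ s).toReal :=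
      ENNReal.toReal_pos hμs (measure_ne_top μ s)
    have : 0 < (μ s).toReal • (k₂ - k₁) := by
      rw [smul_eq_mul]; exact mul_pos hμs' (by linarith)
    rw [measureReal_def] at hmono
    linarith
  refine ⟨⟨_, (hfam (k₂ + a) le_rfl).1⟩, ?_, hiii⟩
  -- sInf = a
  set S := (fun μ => ∫ x, max 0 (x - k₁) ∂μ) '' F with hS
  have hne : S.Nonempty := ⟨_, ⟨_, (hfam (k₂ + a) le_rfl).1, rfl⟩⟩
  have hbdd : ∀ y ∈ S, a ≤ y := by
    rintro y ⟨μ, hμ, rfl⟩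
    exact (hiii μ hμ).le
  refine le_antisymm ?_ (le_csInf hne hbdd)
  rw [Real.sInf_le_iff ⟨a, hbdd⟩ hne]
  intro ε hε
  -- choose t large
  set t := k₂ + a + a * (k₂ - k₁) / ε with htdef
  have hX : 0 ≤ a * (k₂ - k₁) / ε := div_nonneg (mul_nonneg ha.le (by linarith)) hε.le
  have ht : k₂ + a ≤ t := by rw [htdef]; linarith
  refine ⟨_, ⟨_, (hfam t ht).1, rfl⟩, ?_⟩
  show (∫ x, max 0 (x - k₁) ∂(mixM (a / (t - k₂)) t)) < a + ε
  rw [(hfam t ht).2]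
  have htk : (0:ℝ) < t - k₂ := by linarith
  rw [div_mul_eq_mul_div, div_lt_iff₀ htk]
  have h1 : a * (t - k₁) = a * (t - k₂) + a * (k₂ - k₁) := by ring
  have h2 : a * (k₂ - k₁) / ε < t - k₂ := by
    rw [htdef]; linarith
  have h3 : a * (k₂ - k₁) < ε * (t - k₂) := by
    exact lt_of_lt_of_eq ((div_lt_iff₀ hε).mp h2) (mul_comm _ _)
  calc a * (t - k₁) = a * (t - k₂) + a * (k₂ - k₁) := h1
    _ < a * (t - k₂) + ε * (t - k₂) := by linarith
    _ = (a + ε) * (t - k₂) := by ring
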